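/- If (x,y) lies in the region Ê₁ = {(x,y) : k ≤ x ≤ û₁, y < ŵ₁}, then the second coordinate strictly increases under the Chialvo map: ȳ > y, where (x̄, ȳ) = f(x,y). -/
import Mathlib


/-- In region `Ê₁ = {k ≤ x ≤ û₁, y < ŵ₁}` the second coordinate strictly increases
under the Chialvo map. -/
theorem chialvo_regionE1_increase
    (a b c k : ℝ)
    (ha : a ∈ Set.Ioo (0:ℝ) 1) (hb : b ∈ Set.Ioo (0:ℝ) 1)
    (hc : c ∈ Set.Ioo (0:ℝ) 1) (hk : 0 < k)
    (f : ℝ × ℝ → ℝ × ℝ)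
    (hf : ∀ p : ℝ × ℝ,
      f p = (p.1 ^ 2 * Real.exp (p.2 - p.1) + k, a * p.2 - b * p.1 + c))
    (v u1 w1 : ℝ)
    (hv : v = (c - b * k) / (1 - a))
    (hu1 : u1 = 4 / Real.exp 2 * Real.exp v + k)
    (hw1 : w1 = (c - b * u1) / (1 - a)) :
    ∀ p : ℝ × ℝ, k ≤ p.1 → p.1 ≤ u1 → p.2 < w1 → (f p).2 > p.2 := by
  intro p hk1 hu hw
  rw [hf]
  have ha1 : 0 < 1 - a := by linarith [ha.2]
  have hb0 : 0 < b := hb.1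
  have h1 : (1 - a) * p.2 < c - b * u1 := by
    have h2 := (lt_div_iff₀ ha1).mp (hw1 ▸ hw)
    linarith
  simp only
  nlinarith [mul_le_mul_of_nonneg_left hu hb0.le]
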